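/- For every s ∈ ℂ with Re(s) > d + |μ|/2 the Eisenstein–Kronecker series K^μ(H,z,w,s,Λ) converges absolutely; moreover, for every σ₀ > d + |μ|/2 and every compact subset C ⊂ ℂ^d × ℂ^d the convergence is uniform on {s : Re(s) ≥ σ₀} × C. -/

import Mathlib

open scoped Real
open Complex MeasureTheory Filter

noncomputable section

/-- The diagonal Hermitian form `H(z,w) = ∑ i, h i * z i * conj (w i)` on `ℂ^d`. -/
def hermH {d : ℕ} (h : Fin d → ℝ) (z w : Fin d → ℂ) : ℂ :=
  ∑ i, (h i : ℂ) * z i * (starRingEnd ℂ) (w i)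

/-- The squared norm `|z|_H² = ∑ i, h i * |z i|²` associated to `H`. -/
def normHsq {d : ℕ} (h : Fin d → ℝ) (z : Fin d → ℂ) : ℝ :=
  ∑ i, h i * Complex.normSq (z i)

/-- The alternating form `⟨z,w⟩ = Im H(z,w)`. -/
def pairH {d : ℕ} (h : Fin d → ℝ) (z w : Fin d → ℂ) : ℝ := (hermH h z w).im

/-- The general term of the Eisenstein–Kronecker series:
`conj (z+λ)^μ ⬝ |z+λ|_H^(-2s) ⬝ e^{2πi⟨λ,w⟩}`. -/
def Kterm {d : ℕ} (h : Fin d → ℝ) (μ : Fin d → ℕ) (z w : Fin d → ℂ) (s : ℂ)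
    (l : Fin d → ℂ) : ℂ :=
  (∏ i, (starRingEnd ℂ) (z i + l i) ^ μ i) *
    ((normHsq h (z + l) : ℂ) ^ (-s)) *
    Complex.exp (2 * (π : ℂ) * Complex.I * (pairH h l w : ℂ))

/-- The general term of the theta series:
`conj (z+λ)^μ ⬝ e^{-πt|z+λ|_H²} ⬝ e^{2πi⟨λ,w⟩}`. -/
def thetaTerm {d : ℕ} (h : Fin d → ℝ) (μ : Fin d → ℕ) (t : ℝ) (z w : Fin d → ℂ)
    (l : Fin d → ℂ) : ℂ :=
  (∏ i, (starRingEnd ℂ) (z i + l i) ^ μ i) *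
    Complex.exp ((-(π * t * normHsq h (z + l)) : ℝ) : ℂ) *
    Complex.exp (2 * (π : ℂ) * Complex.I * (pairH h l w : ℂ))

lemma pairH_add_left {d : ℕ} (h : Fin d → ℝ) (a b w : Fin d → ℂ) :
    pairH h (a + b) w = pairH h a w + pairH h b w := by
  unfold pairH hermH
  rw [← Complex.add_im]
  congr 1
  rw [← Finset.sum_add_distrib]
  refine Finset.sum_congr rfl fun i _ => ?_
  rw [Pi.add_apply]
  ring

lemma pairH_zsmul_left {d : ℕ} (h : Fin d → ℝ) (n : ℤ) (a w : Fin d → ℂ) :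
    pairH h (n • a) w = (n : ℝ) * pairH h a w := by
  unfold pairH hermH
  have key : (∑ i, (h i : ℂ) * (n • a) i * (starRingEnd ℂ) (w i))
      = (n : ℂ) * ∑ i, (h i : ℂ) * a i * (starRingEnd ℂ) (w i) := by
    rw [Finset.mul_sum]
    refine Finset.sum_congr rfl fun i _ => ?_
    rw [Pi.smul_apply, zsmul_eq_mul]
    ring
  rw [key, Complex.mul_im]
  simp

/-- The dual lattice `Λ* = {l : ⟨l, Λ⟩ ⊆ ℤ}` with respect to `⟨·,·⟩ = Im H`. -/
def dualLattice {d : ℕ} (h : Fin d → ℝ) (Λ : Submodule ℤ (Fin d → ℂ)) :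
    Submodule ℤ (Fin d → ℂ) where
  carrier := {l | ∀ x ∈ Λ, ∃ n : ℤ, pairH h l x = (n : ℝ)}
  zero_mem' := by
    intro x _
    exact ⟨0, by simp [pairH, hermH]⟩
  add_mem' := by
    intro a b ha hb x hx
    obtain ⟨m, hm⟩ := ha x hx
    obtain ⟨n, hn⟩ := hb x hx
    exact ⟨m + n, by rw [pairH_add_left, hm, hn]; push_cast; ring⟩
  smul_mem' := by
    intro n a ha x hx
    obtain ⟨m, hm⟩ := ha x hx
    exact ⟨n * m, by rw [pairH_zsmul_left, hm]; push_cast; ring⟩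

/-- The volume of `ℂ^d/Λ` with respect to the metric induced by `H`, i.e. `(∏ i, h i)`
times the Euclidean covolume of `Λ`. -/
def covolH {d : ℕ} (h : Fin d → ℝ) (Λ : Submodule ℤ (Fin d → ℂ)) : ℝ :=
  (∏ i, h i) * ZLattice.covolume Λ

open Classical in
/-- `δ_{μ,v,M} = 1` if `v ∈ M` and `|μ| = 0`, and `0` otherwise. -/
def deltaEK {d : ℕ} (μ : Fin d → ℕ) (v : Fin d → ℂ) (M : Submodule ℤ (Fin d → ℂ)) : ℂ :=
  if v ∈ M ∧ ∑ i, μ i = 0 then 1 else 0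

end


section Aux

open Finset

private lemma step_option {g : ℤ → ℝ} (hg0 : ∀ a, 0 ≤ g a) (hg : Summable g)
    {α : Type} [Fintype α] (hα : Summable fun x : α → ℤ => ∏ i, g (x i)) :
    Summable fun x : Option α → ℤ => ∏ i, g (x i) := by
  rw [← (Equiv.piOptionEquivProd (β := fun _ : Option α => ℤ)).symm.summable_iff]
  have h3 : Summable fun p : ℤ × (α → ℤ) => g p.1 * ∏ i, g (p.2 i) :=
    Summable.mul_of_nonneg (f := g) (g := fun x : α → ℤ => ∏ i, g (x i)) hg hα hg0
      (fun x => Finset.prod_nonneg fun i _ => hg0 _)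
  refine h3.congr fun p => ?_
  simp only [Function.comp_apply]
  rw [Fintype.prod_option]
  simp [Equiv.piOptionEquivProd]

private lemma summable_pi_prod {g : ℤ → ℝ} (hg0 : ∀ a, 0 ≤ g a) (hg : Summable g) :
    ∀ (ι : Type) [Fintype ι], Summable fun x : ι → ℤ => ∏ i, g (x i) := by
  intro ι hι
  refine Fintype.induction_empty_option
    (P := fun α inst => Summable fun x : α → ℤ => ∏ i ∈ @Finset.univ α inst, g (x i))
    ?_ ?_ ?_ ι
  · intro α β _ e hα
    letI : Fintype α := Fintype.ofEquiv β e.symm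
    rw [← (Equiv.arrowCongr e (Equiv.refl ℤ)).summable_iff]
    refine hα.congr fun x => ?_
    simp only [Equiv.arrowCongr_apply, Function.comp, Equiv.refl_symm, Equiv.refl_apply]
    exact (Equiv.prod_comp e.symm (fun j => g (x j))).symm
  · exact .of_finite
  · intro α inst hα
    exact step_option hg0 hg hα

private lemma summable_int_pi {ι : Type} [Fintype ι] {r : ℝ} (hr : (Fintype.card ι : ℝ) < r) :
    Summable fun x : ι → ℤ => ‖x‖ ^ (-r) := by
  have hr0 : 0 < r := lt_of_le_of_lt (Nat.cast_nonneg _) hr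
  cases isEmpty_or_nonempty ι with
  | inl he => exact .of_finite
  | inr hne =>
    set n : ℕ := Fintype.card ι with hn
    have hn1 : 1 ≤ n := Fintype.card_pos
    have hnR : (0:ℝ) < n := by positivity
    set p : ℝ := r / n with hp
    have hp1 : 1 < p := (one_lt_div hnR).2 hr
    have hp0 : 0 < p := lt_trans one_pos hp1
    have hg : Summable fun a : ℤ => (1 + |(a:ℝ)|) ^ (-p) := by
      refine Summable.of_norm_bounded_eventually (g := fun a : ℤ => |(a:ℝ)| ^ (-p))
        (Real.summable_abs_int_rpow hp1) ?_
      rw [Filter.eventually_cofinite]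
      refine Set.Finite.subset (Set.finite_singleton (0:ℤ)) ?_
      intro a ha
      simp only [Set.mem_setOf_eq, not_le] at ha
      by_contra h0
      apply absurd ?_ ha.not_ge
      have h1 : (1:ℝ) ≤ |(a:ℝ)| := by
        rw [← Int.cast_abs]; exact_mod_cast Int.one_le_abs h0
      rw [Real.norm_of_nonneg (Real.rpow_nonneg (by positivity) _)]
      exact Real.rpow_le_rpow_of_nonpos (by linarith) (by linarith) (by linarith)
    have hg0 : ∀ a : ℤ, 0 ≤ (1 + |(a:ℝ)|) ^ (-p) := fun a => Real.rpow_nonneg (by positivity) _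
    have hprod := summable_pi_prod hg0 hg ι
    refine Summable.of_nonneg_of_le (fun x => Real.rpow_nonneg (norm_nonneg _) _)
      (fun x => ?_) (hprod.mul_left ((2:ℝ) ^ r))
    rcases eq_or_ne x 0 with hx | hx
    · rw [hx, norm_zero, Real.zero_rpow (neg_ne_zero.2 hr0.ne')]
      positivity
    · obtain ⟨i0, hi0⟩ := Function.ne_iff.1 hx
      have h1x : (1:ℝ) ≤ ‖x‖ := by
        refine le_trans ?_ (norm_le_pi_norm x i0)
        rw [Int.norm_eq_abs]
        exact_mod_cast Int.one_le_abs hi0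
      have hx0 : (0:ℝ) < ‖x‖ := lt_of_lt_of_le one_pos h1x
      set A : ℝ := ∏ i, (1 + |(x i : ℝ)|) with hA
      have hA1 : (1:ℝ) ≤ A := by
        rw [hA]
        have := Finset.prod_le_prod (s := Finset.univ) (f := fun _ : ι => (1:ℝ))
          (g := fun i => 1 + |(x i : ℝ)|) (fun i _ => zero_le_one)
          (fun i _ => le_add_of_nonneg_right (abs_nonneg _))
        simpa using this
      have hAB : A ≤ (2 * ‖x‖) ^ n := by
        rw [hA]
        calc ∏ i, (1 + |(x i : ℝ)|) ≤ ∏ _i : ι, (2 * ‖x‖) := by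
              refine Finset.prod_le_prod (fun i _ => by positivity) fun i _ => ?_
              have : |(x i : ℝ)| ≤ ‖x‖ := by
                rw [← Int.norm_eq_abs]
                exact_mod_cast norm_le_pi_norm x i
              linarith
          _ = (2 * ‖x‖) ^ n := by rw [Finset.prod_const, Finset.card_univ]
      have key : ‖x‖ ^ (-r) = 2 ^ r * (2 * ‖x‖) ^ (-r) := by
        rw [Real.mul_rpow (by norm_num) hx0.le, ← mul_assoc, ← Real.rpow_add (by norm_num)]
        simp
      rw [key]
      refine mul_le_mul_of_nonneg_left ?_ (by positivity)
      have h2 : (2 * ‖x‖) ^ (-r) = ((2 * ‖x‖) ^ n) ^ (-p) := by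
        rw [← Real.rpow_natCast (2 * ‖x‖) n, ← Real.rpow_mul (by positivity)]
        congr 1
        rw [hp]
        field_simp
      rw [h2]
      calc ((2 * ‖x‖) ^ n) ^ (-p) ≤ A ^ (-p) :=
            Real.rpow_le_rpow_of_nonpos (by positivity) hAB (by linarith)
        _ = ∏ i, (1 + |(x i : ℝ)|) ^ (-p) :=
            (Real.finset_prod_rpow _ _ (fun i _ => by positivity) _).symm

private lemma summable_zlattice {d : ℕ} (Λ : Submodule ℤ (Fin d → ℂ)) [DiscreteTopology Λ]
    [IsZLattice ℝ Λ] {r : ℝ} (hr : 2 * (d : ℝ) < r) :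
    Summable fun l : Λ => ‖(l : Fin d → ℂ)‖ ^ (-r) := by
  have hr0 : 0 < r := lt_of_le_of_lt (by positivity) hr
  haveI : Module.Finite ℤ Λ := ZLattice.module_finite ℝ Λ
  haveI : Module.Free ℤ Λ := ZLattice.module_free ℝ Λ
  set ι := Module.Free.ChooseBasisIndex ℤ Λ
  set b : Module.Basis ι ℤ Λ := Module.Free.chooseBasis ℤ Λ
  have hcard : (Fintype.card ι : ℝ) = 2 * d := by
    have h1 : Fintype.card ι = Module.finrank ℤ Λ :=
      (Module.finrank_eq_card_chooseBasisIndex ℤ Λ).symm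
    have h2 : Module.finrank ℤ Λ = Module.finrank ℝ (Fin d → ℂ) := ZLattice.rank ℝ Λ
    have h3 : Module.finrank ℝ (Fin d → ℂ) = 2 * d := by
      simp [Module.finrank_pi_fintype, Complex.finrank_real_complex, mul_comm]
    rw [h1, h2, h3]
    push_cast; ring
  set B : Module.Basis ι ℝ (Fin d → ℂ) := b.ofZLatticeBasis ℝ Λ
  set T := B.equivFunL.toContinuousLinearMap
  set c : ℝ := max ‖T‖ 1 with hc
  have hc1 : 0 < c := lt_of_lt_of_le one_pos (le_max_right _ _)
  have hTv : ∀ v : Fin d → ℂ, ‖B.equivFun v‖ ≤ c * ‖v‖ := by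
    intro v
    calc ‖B.equivFun v‖ = ‖T v‖ := rfl
      _ ≤ ‖T‖ * ‖v‖ := T.le_opNorm v
      _ ≤ c * ‖v‖ := mul_le_mul_of_nonneg_right (le_max_left _ _) (norm_nonneg _)
  have hkey : ∀ x : ι → ℤ, ‖x‖ ≤ c * ‖((b.equivFun.symm x : Λ) : Fin d → ℂ)‖ := by
    intro x
    set l : Λ := b.equivFun.symm x with hl
    have hrepr : B.equivFun (l : Fin d → ℂ) = fun i => ((x i : ℤ) : ℝ) := by
      funext i
      have h1 : B.equivFun (l : Fin d → ℂ) i = B.repr (l : Fin d → ℂ) i := by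
        rw [B.equivFun_apply]
      rw [h1, Module.Basis.ofZLatticeBasis_repr_apply]
      have h2 : b.repr l i = x i := by
        have h3 := b.equivFun.apply_symm_apply x
        calc b.repr l i = b.equivFun l i := by rw [Module.Basis.equivFun_apply]
          _ = x i := by rw [hl, h3]
      exact_mod_cast congrArg Int.cast h2
    have hnx : ‖(fun i => ((x i : ℤ) : ℝ))‖ = ‖x‖ := by
      apply le_antisymm
      · refine (pi_norm_le_iff_of_nonneg (norm_nonneg _)).2 fun i => ?_
        rw [Int.norm_cast_real]
        exact norm_le_pi_norm x i
      · refine (pi_norm_le_iff_of_nonneg (norm_nonneg _)).2 fun i => ?_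
        rw [← Int.norm_cast_real]
        exact norm_le_pi_norm (fun j => ((x j : ℤ) : ℝ)) i
    calc ‖x‖ = ‖B.equivFun (l : Fin d → ℂ)‖ := by rw [hrepr, hnx]
      _ ≤ c * ‖(l : Fin d → ℂ)‖ := hTv _
  have hmaj : Summable fun x : ι → ℤ => c ^ r * ‖x‖ ^ (-r) :=
    (summable_int_pi (by rw [hcard]; exact hr)).mul_left _
  rw [← (b.equivFun.toEquiv.symm).summable_iff]
  refine Summable.of_nonneg_of_le (fun x => Real.rpow_nonneg (norm_nonneg _) _)
    (fun x => ?_) hmaj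
  show ‖((b.equivFun.symm x : Λ) : Fin d → ℂ)‖ ^ (-r) ≤ c ^ r * ‖x‖ ^ (-r)
  rcases eq_or_ne x 0 with hx | hx
  · rw [hx, map_zero]
    simp [Real.zero_rpow (neg_ne_zero.2 hr0.ne')]
  · have hx0 : 0 < ‖x‖ := norm_pos_iff.2 hx
    have h1 : c⁻¹ * ‖x‖ ≤ ‖((b.equivFun.symm x : Λ) : Fin d → ℂ)‖ := by
      rw [inv_mul_le_iff₀ hc1]
      exact hkey x
    calc ‖((b.equivFun.symm x : Λ) : Fin d → ℂ)‖ ^ (-r) ≤ (c⁻¹ * ‖x‖) ^ (-r) :=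
          Real.rpow_le_rpow_of_nonpos (by positivity) h1 (by linarith)
      _ = c ^ r * ‖x‖ ^ (-r) := by
          rw [Real.mul_rpow (by positivity) hx0.le, Real.inv_rpow hc1.le, Real.rpow_neg hc1.le,
            inv_inv]

/-- The minimum of the weights `h i`. -/
private noncomputable def minh {d : ℕ} (hd : 1 ≤ d) (h : Fin d → ℝ) : ℝ :=
  Finset.univ.inf' ⟨⟨0, hd⟩, Finset.mem_univ _⟩ h

private lemma minh_pos {d : ℕ} (hd : 1 ≤ d) {h : Fin d → ℝ} (hpos : ∀ i, 0 < h i) :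
    0 < minh hd h := by
  unfold minh
  exact (Finset.lt_inf'_iff _).2 fun i _ => hpos i

private lemma minh_le {d : ℕ} (hd : 1 ≤ d) (h : Fin d → ℝ) (i : Fin d) : minh hd h ≤ h i :=
  Finset.inf'_le _ (Finset.mem_univ i)

private lemma normHsq_nonneg {d : ℕ} {h : Fin d → ℝ} (hpos : ∀ i, 0 < h i) (v : Fin d → ℂ) :
    0 ≤ normHsq h v :=
  Finset.sum_nonneg fun i _ => mul_nonneg (hpos i).le (Complex.normSq_nonneg _)

private lemma le_normHsq_single {d : ℕ} {h : Fin d → ℝ} (hpos : ∀ i, 0 < h i) (v : Fin d → ℂ)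
    (j : Fin d) : h j * Complex.normSq (v j) ≤ normHsq h v :=
  Finset.single_le_sum (fun i _ => mul_nonneg (hpos i).le (Complex.normSq_nonneg _))
    (Finset.mem_univ j)

private lemma minh_mul_sq_le_normHsq {d : ℕ} (hd : 1 ≤ d) {h : Fin d → ℝ} (hpos : ∀ i, 0 < h i)
    (v : Fin d → ℂ) : minh hd h * ‖v‖ ^ 2 ≤ normHsq h v := by
  have hm := minh_pos hd hpos
  have hv : ‖v‖ ≤ Real.sqrt (normHsq h v / minh hd h) := by
    refine (pi_norm_le_iff_of_nonneg (Real.sqrt_nonneg _)).2 fun i => ?_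
    rw [Real.le_sqrt (norm_nonneg _) (div_nonneg (normHsq_nonneg hpos v) hm.le)]
    rw [le_div_iff₀ hm]
    calc ‖v i‖ ^ 2 * minh hd h = minh hd h * ‖v i‖ ^ 2 := by ring
      _ ≤ h i * Complex.normSq (v i) := by
          rw [← Complex.sq_norm]
          exact mul_le_mul_of_nonneg_right (minh_le hd h i) (by positivity)
      _ ≤ normHsq h v := le_normHsq_single hpos v i
  have := pow_le_pow_left₀ (norm_nonneg v) hv 2
  rw [Real.sq_sqrt (div_nonneg (normHsq_nonneg hpos v) hm.le)] at this
  calc minh hd h * ‖v‖ ^ 2 ≤ minh hd h * (normHsq h v / minh hd h) :=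
        mul_le_mul_of_nonneg_left this hm.le
    _ = normHsq h v := by field_simp

private lemma norm_Kterm {d : ℕ} {h : Fin d → ℝ} (hpos : ∀ i, 0 < h i) (μ : Fin d → ℕ)
    (z w : Fin d → ℂ) {s : ℂ} (hs : 0 < s.re) (l : Fin d → ℂ) :
    ‖Kterm h μ z w s l‖ =
      (∏ i, ‖z i + l i‖ ^ μ i) * normHsq h (z + l) ^ (-s.re) := by
  rw [Kterm, norm_mul, norm_mul]
  have he : ‖Complex.exp (2 * (π : ℂ) * Complex.I * ((pairH h l w : ℝ) : ℂ))‖ = 1 := by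
    rw [Complex.norm_exp]
    have : (2 * (π : ℂ) * Complex.I * ((pairH h l w : ℝ) : ℂ)).re = 0 := by
      simp [Complex.mul_re, Complex.mul_im]
    rw [this, Real.exp_zero]
  rw [he, mul_one]
  congr 1
  · rw [norm_prod]
    refine Finset.prod_congr rfl fun i _ => ?_
    rw [norm_pow, RCLike.norm_conj]
  · rcases (normHsq_nonneg hpos (z + l)).eq_or_lt with h0 | h0
    · have hne : -s ≠ 0 := by
        intro hh
        rw [neg_eq_zero] at hh
        rw [hh] at hs
        simp at hs
      rw [← h0, Real.zero_rpow (neg_ne_zero.2 (by intro hh; rw [hh] at hs; simp at hs)),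
        Complex.ofReal_zero, Complex.zero_cpow hne, norm_zero]
    · rw [Complex.norm_cpow_eq_rpow_re_of_pos h0, Complex.neg_re]

/-- The radius beyond which the standard majorant bound applies. -/
private noncomputable def ekRad {d : ℕ} (hd : 1 ≤ d) (h : Fin d → ℝ) (R : ℝ) : ℝ :=
  max (2 * R) (2 / Real.sqrt (minh hd h))

private lemma Kterm_bound {d : ℕ} (hd : 1 ≤ d) {h : Fin d → ℝ} (hpos : ∀ i, 0 < h i)
    (μ : Fin d → ℕ) {σ₀ R : ℝ} (hσ : 0 < σ₀) (hR : 0 ≤ R) {z : Fin d → ℂ} (w : Fin d → ℂ)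
    {s : ℂ} (hs : σ₀ ≤ s.re) (hz : ‖z‖ ≤ R) {l : Fin d → ℂ} (hl : ekRad hd h R ≤ ‖l‖) :
    ‖Kterm h μ z w s l‖ ≤
      (2 ^ (∑ i, μ i) * (minh hd h / 4) ^ (-σ₀)) * ‖l‖ ^ ((∑ i, (μ i : ℝ)) - 2 * σ₀) := by
  set c₁ : ℝ := minh hd h with hc₁
  have hc₁0 : 0 < c₁ := minh_pos hd hpos
  have hsq : 0 < Real.sqrt c₁ := Real.sqrt_pos.2 hc₁0
  have hl2 : 2 / Real.sqrt c₁ ≤ ‖l‖ := le_trans (le_max_right _ _) hl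
  have hlR : 2 * R ≤ ‖l‖ := le_trans (le_max_left _ _) hl
  have hl0 : 0 < ‖l‖ := lt_of_lt_of_le (by positivity) hl2
  have hzl_low : ‖l‖ / 2 ≤ ‖z + l‖ := by
    have h1 : ‖l‖ ≤ ‖z + l‖ + ‖z‖ := by
      calc ‖l‖ = ‖(z + l) - z‖ := by congr 1; abel
        _ ≤ ‖z + l‖ + ‖z‖ := norm_sub_le _ _
    have h2 : ‖z‖ ≤ ‖l‖ / 2 := le_trans hz (by linarith)
    linarith
  have hzl_up : ‖z + l‖ ≤ 2 * ‖l‖ := by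
    calc ‖z + l‖ ≤ ‖z‖ + ‖l‖ := norm_add_le _ _
      _ ≤ R + ‖l‖ := by linarith
      _ ≤ 2 * ‖l‖ := by linarith
  set t : ℝ := normHsq h (z + l) with ht
  have htlow : c₁ / 4 * ‖l‖ ^ 2 ≤ t := by
    have h1 : c₁ * (‖l‖ / 2) ^ 2 ≤ c₁ * ‖z + l‖ ^ 2 :=
      mul_le_mul_of_nonneg_left (pow_le_pow_left₀ (by positivity) hzl_low 2) hc₁0.le
    have h2 := minh_mul_sq_le_normHsq hd hpos (z + l)
    calc c₁ / 4 * ‖l‖ ^ 2 = c₁ * (‖l‖ / 2) ^ 2 := by ring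
      _ ≤ c₁ * ‖z + l‖ ^ 2 := h1
      _ ≤ t := h2
  have ht1 : 1 ≤ t := by
    refine le_trans ?_ htlow
    have h4 : (2 / Real.sqrt c₁) ^ 2 ≤ ‖l‖ ^ 2 := pow_le_pow_left₀ (by positivity) hl2 2
    have h5 : (2 / Real.sqrt c₁) ^ 2 = 4 / c₁ := by
      rw [div_pow, Real.sq_sqrt hc₁0.le]
      norm_num
    calc (1:ℝ) = c₁ / 4 * (4 / c₁) := by field_simp
      _ ≤ c₁ / 4 * ‖l‖ ^ 2 := by
          refine mul_le_mul_of_nonneg_left ?_ (by positivity)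
          rw [← h5]; exact h4
  have ht0 : 0 < t := lt_of_lt_of_le one_pos ht1
  rw [norm_Kterm hpos μ z w (lt_of_lt_of_le hσ hs) l]
  have hprod : (∏ i, ‖z i + l i‖ ^ μ i) ≤ (2 * ‖l‖) ^ (∑ i, μ i) := by
    rw [← Finset.prod_pow_eq_pow_sum]
    refine Finset.prod_le_prod (fun i _ => by positivity) fun i _ => ?_
    refine pow_le_pow_left₀ (norm_nonneg _) ?_ _
    calc ‖z i + l i‖ = ‖(z + l) i‖ := by rw [Pi.add_apply]
      _ ≤ ‖z + l‖ := norm_le_pi_norm _ i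
      _ ≤ 2 * ‖l‖ := hzl_up
  have hrpow : t ^ (-s.re) ≤ (c₁ / 4) ^ (-σ₀) * ‖l‖ ^ (-(2 * σ₀)) := by
    have h1 : t ^ (-s.re) ≤ t ^ (-σ₀) :=
      Real.rpow_le_rpow_of_exponent_le ht1 (by linarith)
    have h2 : t ^ (-σ₀) ≤ (c₁ / 4 * ‖l‖ ^ 2) ^ (-σ₀) :=
      Real.rpow_le_rpow_of_nonpos (by positivity) htlow (by linarith)
    have h3 : (c₁ / 4 * ‖l‖ ^ 2) ^ (-σ₀) = (c₁ / 4) ^ (-σ₀) * ‖l‖ ^ (-(2 * σ₀)) := by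
      rw [Real.mul_rpow (by positivity) (by positivity)]
      congr 1
      rw [← Real.rpow_natCast ‖l‖ 2, ← Real.rpow_mul hl0.le]
      norm_num
    linarith [h3 ▸ h2]
  have hfin : (2 * ‖l‖) ^ (∑ i, μ i) * ((c₁ / 4) ^ (-σ₀) * ‖l‖ ^ (-(2 * σ₀))) =
      (2 ^ (∑ i, μ i) * (c₁ / 4) ^ (-σ₀)) * ‖l‖ ^ ((∑ i, (μ i : ℝ)) - 2 * σ₀) := by
    rw [mul_pow]
    have h4 : (‖l‖ : ℝ) ^ (∑ i, μ i) * ‖l‖ ^ (-(2 * σ₀)) =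
        ‖l‖ ^ ((∑ i, (μ i : ℝ)) - 2 * σ₀) := by
      rw [← Real.rpow_natCast ‖l‖ (∑ i, μ i), ← Real.rpow_add hl0]
      congr 1
      push_cast
      ring
    calc 2 ^ (∑ i, μ i) * ‖l‖ ^ (∑ i, μ i) * ((c₁ / 4) ^ (-σ₀) * ‖l‖ ^ (-(2 * σ₀)))
        = (2 ^ (∑ i, μ i) * (c₁ / 4) ^ (-σ₀)) * (‖l‖ ^ (∑ i, μ i) * ‖l‖ ^ (-(2 * σ₀))) := by
          ring
      _ = _ := by rw [h4]
  calc (∏ i, ‖z i + l i‖ ^ μ i) * t ^ (-s.re)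
      ≤ (2 * ‖l‖) ^ (∑ i, μ i) * ((c₁ / 4) ^ (-σ₀) * ‖l‖ ^ (-(2 * σ₀))) :=
        mul_le_mul hprod hrpow (Real.rpow_nonneg ht0.le _) (by positivity)
    _ = _ := hfin

private lemma finite_small_norm {d : ℕ} (Λ : Submodule ℤ (Fin d → ℂ)) [DiscreteTopology Λ]
    (ρ : ℝ) : {l : Λ | ¬ ρ ≤ ‖(l : Fin d → ℂ)‖}.Finite := by
  haveI : DiscreteTopology Λ.toAddSubgroup :=
    (inferInstance : DiscreteTopology Λ)
  have hclosed : IsClosed (Λ : Set (Fin d → ℂ)) :=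
    AddSubgroup.isClosed_of_discrete (H := Λ.toAddSubgroup)
  have hcpt : IsCompact ((Λ : Set (Fin d → ℂ)) ∩ Metric.closedBall 0 ρ) :=
    (isCompact_closedBall (0 : Fin d → ℂ) ρ).inter_left hclosed
  haveI : DiscreteTopology ((Λ : Set (Fin d → ℂ)) ∩ Metric.closedBall 0 ρ :
      Set (Fin d → ℂ)) :=
    DiscreteTopology.of_subset (inferInstance : DiscreteTopology Λ)
      Set.inter_subset_left
  have hfin : ((Λ : Set (Fin d → ℂ)) ∩ Metric.closedBall 0 ρ).Finite := hcpt.finite ⟨this⟩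
  have hfin2 : ((Subtype.val : Λ → (Fin d → ℂ)) ⁻¹'
      ((Λ : Set (Fin d → ℂ)) ∩ Metric.closedBall 0 ρ)).Finite :=
    hfin.preimage (Set.injOn_of_injective Subtype.val_injective)
  refine hfin2.subset fun l hl => ?_
  simp only [Set.mem_setOf_eq, not_le] at hl
  refine ⟨l.2, ?_⟩
  simp only [Metric.mem_closedBall, dist_zero_right]
  exact hl.le

end Aux

/-- For every `s` with `Re s > d + |μ|/2` the Eisenstein–Kronecker series
`K^μ(H,z,w,s,Λ) = ∑_{λ ∈ Λ, λ ≠ -z} conj(z+λ)^μ |z+λ|_H^{-2s} e^{2πi⟨λ,w⟩}`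
converges absolutely; moreover for every `σ₀ > d + |μ|/2` and every compact
`C ⊆ ℂ^d × ℂ^d` the convergence is uniform on `{s : Re s ≥ σ₀} × C`.
(On this region the term at `λ = -z` vanishes identically, so summing over all of `Λ`
in the uniform statement agrees with the sum over `λ ≠ -z`.) -/
theorem eisensteinKronecker_summable_and_tendstoUniformlyOn
    {d : ℕ} (hd : 1 ≤ d) (h : Fin d → ℝ) (hpos : ∀ i, 0 < h i)
    (Λ : Submodule ℤ (Fin d → ℂ)) [DiscreteTopology Λ] [IsZLattice ℝ Λ]
    (μ : Fin d → ℕ) :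
    (∀ (z w : Fin d → ℂ) (s : ℂ), (d : ℝ) + (∑ i, (μ i : ℝ)) / 2 < s.re →
      Summable fun l : {l : Λ // (l : Fin d → ℂ) ≠ -z} =>
        ‖Kterm h μ z w s ((l : Λ) : Fin d → ℂ)‖) ∧
    (∀ σ₀ : ℝ, (d : ℝ) + (∑ i, (μ i : ℝ)) / 2 < σ₀ →
      ∀ C : Set ((Fin d → ℂ) × (Fin d → ℂ)), IsCompact C →
      TendstoUniformlyOn
        (fun (t : Finset Λ) (p : ℂ × ((Fin d → ℂ) × (Fin d → ℂ))) =>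
          ∑ l ∈ t, Kterm h μ p.2.1 p.2.2 p.1 (l : Fin d → ℂ))
        (fun p => ∑' l : Λ, Kterm h μ p.2.1 p.2.2 p.1 (l : Fin d → ℂ))
        Filter.atTop ({s : ℂ | σ₀ ≤ s.re} ×ˢ C)) := by
  have hd1 : (1:ℝ) ≤ (d:ℝ) := by exact_mod_cast hd
  set m : ℝ := ∑ i, (μ i : ℝ) with hm
  have hm0 : 0 ≤ m := Finset.sum_nonneg fun i _ => Nat.cast_nonneg _
  constructor
  · -- summability for a fixed (z, w, s)
    intro z w s hs
    have hσ0 : 0 < s.re := by linarith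
    set K : ℝ := 2 ^ (∑ i, μ i) * (minh hd h / 4) ^ (-s.re) with hK
    have hsum : Summable fun l : Λ => ‖Kterm h μ z w s ((l : Λ) : Fin d → ℂ)‖ := by
      have h1 : Summable fun l : Λ => ‖(l : Fin d → ℂ)‖ ^ (-(2 * s.re - m)) :=
        summable_zlattice Λ (by linarith)
      refine Summable.of_norm_bounded_eventually
        (g := fun l : Λ => K * ‖(l : Fin d → ℂ)‖ ^ (-(2 * s.re - m))) (h1.mul_left K) ?_
      rw [Filter.eventually_cofinite]
      refine (finite_small_norm Λ (ekRad hd h ‖z‖)).subset fun l hl => ?_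
      simp only [Set.mem_setOf_eq] at hl ⊢
      intro hρ
      apply hl
      rw [Real.norm_of_nonneg (norm_nonneg _)]
      have := Kterm_bound hd hpos μ hσ0 (norm_nonneg z) w le_rfl le_rfl hρ
      calc ‖Kterm h μ z w s ((l : Λ) : Fin d → ℂ)‖
          ≤ (2 ^ (∑ i, μ i) * (minh hd h / 4) ^ (-s.re)) *
            ‖(l : Fin d → ℂ)‖ ^ ((∑ i, (μ i : ℝ)) - 2 * s.re) := this
        _ = K * ‖(l : Fin d → ℂ)‖ ^ (-(2 * s.re - m)) := by
            rw [hK, hm]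
            congr 2
            ring
    exact hsum.subtype _
  · -- uniform convergence
    intro σ₀ hσ C hC
    have hσ0 : 0 < σ₀ := by linarith
    obtain ⟨R₀, hR₀⟩ := Bornology.IsBounded.exists_norm_le hC.isBounded
    set R : ℝ := max R₀ 0 with hR
    have hR0 : 0 ≤ R := le_max_right _ _
    set K : ℝ := 2 ^ (∑ i, μ i) * (minh hd h / 4) ^ (-σ₀) with hK
    have hu : Summable fun l : Λ => K * ‖(l : Fin d → ℂ)‖ ^ (-(2 * σ₀ - m)) :=
      (summable_zlattice Λ (by linarith)).mul_left K
    refine tendstoUniformlyOn_tsum_of_cofinite_eventually hu ?_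
    rw [Filter.eventually_cofinite]
    refine (finite_small_norm Λ (ekRad hd h R)).subset fun l hl => ?_
    simp only [Set.mem_setOf_eq] at hl ⊢
    intro hρ
    apply hl
    intro p hp
    obtain ⟨hp1, hp2⟩ := Set.mem_prod.1 hp
    have hz : ‖p.2.1‖ ≤ R := le_trans (le_trans (norm_fst_le p.2) (hR₀ p.2 hp2)) (le_max_left _ _)
    have hs : σ₀ ≤ p.1.re := hp1
    have := Kterm_bound hd hpos μ hσ0 hR0 p.2.2 hs hz hρ
    calc ‖Kterm h μ p.2.1 p.2.2 p.1 ((l : Λ) : Fin d → ℂ)‖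
        ≤ (2 ^ (∑ i, μ i) * (minh hd h / 4) ^ (-σ₀)) *
          ‖(l : Fin d → ℂ)‖ ^ ((∑ i, (μ i : ℝ)) - 2 * σ₀) := this
      _ = K * ‖(l : Fin d → ℂ)‖ ^ (-(2 * σ₀ - m)) := by
          rw [hK, hm]
          congr 2
          ring
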